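/- Let h : ℝ → ℝ be the cubic polynomial h(x) = −x³/2 + 3x²/4 + 3x/4, and let h^{(k)} denote its k-fold iterate. Then lim_{m→∞} h^{(⌊1.01·m⌋)}(1/2 + (0.88)^m) = 1/2, whereas lim_{m→∞} h^{(⌊1.01·m⌋)}(1/2 + (0.89)^m) = 1. -/

import Mathlib

open Finset Filter

namespace BooleanNoise

/-- The Boolean truth value of a proposition (classically). -/
noncomputable def bOf (P : Prop) : Bool := @decide P (Classical.propDecidable P)

section Basic

variable {Λ : Type*} [Fintype Λ] [DecidableEq Λ]

/-- Bernoulli(`p`) weight of a single bit. -/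
def bern (p : ℝ) : Bool → ℝ := fun b => if b then p else 1 - p

/-- Weight of a configuration under the product Bernoulli(`p`) measure. -/
def wt (p : ℝ) (ω : Λ → Bool) : ℝ := ∏ i, bern p (ω i)

/-- Probability of an event under the product Bernoulli(`p`) measure. -/
noncomputable def pr (p : ℝ) (A : Set (Λ → Bool)) : ℝ :=
  ∑ ω : Λ → Bool, A.indicator (wt p) ω

/-- Expectation of a real random variable under the product Bernoulli(`p`) measure. -/
noncomputable def ev (p : ℝ) (X : (Λ → Bool) → ℝ) : ℝ :=
  ∑ ω : Λ → Bool, wt p ω * X ω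

/-- Joint single-coordinate weight of `(ω i, (ω^ε) i)`: the coordinate is kept with
probability `1 - ε` and resampled as a fresh Bernoulli(`p`) bit with probability `ε`. -/
def cwt (p ε : ℝ) (x y : Bool) : ℝ :=
  bern p x * ((if y = x then 1 - ε else 0) + ε * bern p y)

/-- Joint weight of the pair `(ω, ω^ε)`. -/
def jwt (p ε : ℝ) (q : (Λ → Bool) × (Λ → Bool)) : ℝ :=
  ∏ i, cwt p ε (q.1 i) (q.2 i)

/-- Probability of an event for the pair `(ω, ω^ε)`. -/
noncomputable def jpr (p ε : ℝ) (A : Set ((Λ → Bool) × (Λ → Bool))) : ℝ :=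
  ∑ q : (Λ → Bool) × (Λ → Bool), A.indicator (jwt p ε) q

/-- Covariance of `f ω` and `f (ω^ε)`. -/
noncomputable def cov (p ε : ℝ) (f : (Λ → Bool) → Bool) : ℝ :=
  jpr p ε {q | f q.1 = true ∧ f q.2 = true}
    - jpr p ε {q | f q.1 = true} * jpr p ε {q | f q.2 = true}

/-- `P(f ω ≠ f (ω^ε))`. -/
noncomputable def disagree (p ε : ℝ) (f : (Λ → Bool) → Bool) : ℝ :=
  jpr p ε {q | f q.1 ≠ f q.2}

/-- `f` is monotone increasing (with respect to the coordinatewise order `false < true`). -/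
def MonotoneBool (f : (Λ → Bool) → Bool) : Prop :=
  ∀ ⦃ω ω' : Λ → Bool⦄, ω ≤ ω' → f ω ≤ f ω'

/-- `W` forces `f = 1`: any configuration that is all ones on `W` has `f`-value `true`. -/
def ForcesOne (f : (Λ → Bool) → Bool) (W : Finset Λ) : Prop :=
  ∀ ω : Λ → Bool, (∀ i ∈ W, ω i = true) → f ω = true

/-- `W` is a 1-witness for `f`: a minimal set forcing `f = 1`. -/
def IsOneWitness (f : (Λ → Bool) → Bool) (W : Finset Λ) : Prop :=
  ForcesOne f W ∧ ∀ W' ⊆ W, ForcesOne f W' → W' = W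

/-- `W` forces `f = 0`: any configuration that is all zeros on `W` has `f`-value `false`. -/
def ForcesZero (f : (Λ → Bool) → Bool) (W : Finset Λ) : Prop :=
  ∀ ω : Λ → Bool, (∀ i ∈ W, ω i = false) → f ω = false

/-- `W` is a 0-witness for `f`: a minimal set forcing `f = 0`. -/
def IsZeroWitness (f : (Λ → Bool) → Bool) (W : Finset Λ) : Prop :=
  ForcesZero f W ∧ ∀ W' ⊆ W, ForcesZero f W' → W' = W

/-- `P(f(ω^ε) = 1 ∣ ω ≡ 1 on W)`. -/
noncomputable def prNoisyOneGivenOnes (p ε : ℝ) (f : (Λ → Bool) → Bool) (W : Finset Λ) : ℝ :=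
  jpr p ε {q | f q.2 = true ∧ ∀ i ∈ W, q.1 i = true}
    / jpr p ε {q | ∀ i ∈ W, q.1 i = true}

/-- `P(f(ω^ε) = 0 ∣ ω ≡ 0 on W)`. -/
noncomputable def prNoisyZeroGivenZeros (p ε : ℝ) (f : (Λ → Bool) → Bool) (W : Finset Λ) : ℝ :=
  jpr p ε {q | f q.2 = false ∧ ∀ i ∈ W, q.1 i = false}
    / jpr p ε {q | ∀ i ∈ W, q.1 i = false}

/-- `P(f(ω^ε) = 1 ∣ f(ω) = 1)`. -/
noncomputable def prNoisyOneGivenOne (p ε : ℝ) (f : (Λ → Bool) → Bool) : ℝ :=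
  jpr p ε {q | f q.2 = true ∧ f q.1 = true} / jpr p ε {q | f q.1 = true}

/-- `max_{W ∈ W₁(f)} [P(f(ω^ε)=1 ∣ ω ≡ 1 on W) − P(f=1)]`. -/
noncomputable def oneSNSgap (p ε : ℝ) (f : (Λ → Bool) → Bool) : ℝ :=
  ⨆ W : {W : Finset Λ // IsOneWitness f W},
    (prNoisyOneGivenOnes p ε f W.1 - pr p {ω | f ω = true})

/-- `max_{W ∈ W₀(f)} [P(f(ω^ε)=0 ∣ ω ≡ 0 on W) − P(f=0)]`. -/
noncomputable def zeroSNSgap (p ε : ℝ) (f : (Λ → Bool) → Bool) : ℝ :=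
  ⨆ W : {W : Finset Λ // IsZeroWitness f W},
    (prNoisyZeroGivenZeros p ε f W.1 - pr p {ω | f ω = false})

end Basic

/-- A sequence of Boolean functions is non-degenerate if `P(fₙ = 1)` stays bounded
away from `0` and from `1`. -/
def Nondeg {Λ : ℕ → Type*} [∀ n, Fintype (Λ n)] [∀ n, DecidableEq (Λ n)]
    (p : ℕ → ℝ) (f : ∀ n, (Λ n → Bool) → Bool) : Prop :=
  ∃ c : ℝ, 0 < c ∧ ∀ᶠ n : ℕ in atTop,
    c ≤ pr (p n) {ω | f n ω = true} ∧ pr (p n) {ω | f n ω = true} ≤ 1 - c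

section Graphs

/-- The index set of the `n.choose 2` potential edges of a graph on `Fin n`. -/
abbrev EdgeIdx (n : ℕ) := {e : Fin n × Fin n // e.1 < e.2}

/-- The graph on `Fin n` determined by an edge configuration. -/
def graphOf {n : ℕ} (ω : EdgeIdx n → Bool) : SimpleGraph (Fin n) where
  Adj i j := ∃ e : EdgeIdx n, ω e = true ∧
    ((e.1.1 = i ∧ e.1.2 = j) ∨ (e.1.1 = j ∧ e.1.2 = i))
  symm := by
    constructor
    rintro i j ⟨e, he, h⟩
    exact ⟨e, he, h.symm⟩
  loopless := by
    constructor
    rintro i ⟨e, he, (⟨h1, h2⟩ | ⟨h1, h2⟩)⟩ <;>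
      · have := e.2
        rw [h1, h2] at this
        exact lt_irrefl i this

/-- `G` contains a cycle of length `ℓ`. -/
def hasCycleOfLength {V : Type*} (G : SimpleGraph V) (ℓ : ℕ) : Prop :=
  ∃ (v : V) (c : G.Walk v v), c.IsCycle ∧ c.length = ℓ

/-- The minimum degree of `G` is at least `k`. -/
def minDegreeAtLeast {V : Type*} (G : SimpleGraph V) (k : ℕ) : Prop :=
  ∀ v : V, k ≤ (G.neighborSet v).ncard

/-- `G` contains a copy of `H`. -/
def containsCopy {V W : Type*} (G : SimpleGraph V) (H : SimpleGraph W) : Prop :=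
  ∃ φ : H →g G, Function.Injective φ

/-- The number of copies of `H` in `G` (subgraphs of `G` isomorphic to `H`). -/
noncomputable def copyCount {V W : Type*} (G : SimpleGraph V) (H : SimpleGraph W) : ℕ :=
  Nat.card {G' : G.Subgraph // Nonempty (G'.coe ≃g H)}

/-- A graph is strictly balanced if every proper subgraph with at least one vertex has a
strictly smaller average degree, i.e. edge/vertex ratio. -/
def StrictlyBalanced {V : Type*} [Fintype V] (H : SimpleGraph V) : Prop :=
  ∀ H' : H.Subgraph, H' ≠ ⊤ → H'.verts.Nonempty →
    (H'.edgeSet.ncard : ℝ) / (H'.verts.ncard : ℝ)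
      < (H.edgeSet.ncard : ℝ) / (Fintype.card V : ℝ)

end Graphs

end BooleanNoise

namespace BooleanNoise

/-- The cubic polynomial `h(x) = −x³/2 + 3x²/4 + 3x/4` arising from recursive 5-majority. -/
noncomputable def hCubic (x : ℝ) : ℝ := -x ^ 3 / 2 + 3 * x ^ 2 / 4 + 3 * x / 4


/-! ### Auxiliary machinery for `stmt19` -/

/-- Conjugated dynamics: `hCubic (1/2 + t) = 1/2 + gAux t`. -/
noncomputable def gAux (t : ℝ) : ℝ := 9/8 * t - t^3/2

lemma hCubic_conj (t : ℝ) : hCubic (1/2 + t) = 1/2 + gAux t := by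
  unfold hCubic gAux; ring

lemma gAux_nonneg {t : ℝ} (h0 : 0 ≤ t) (h1 : t ≤ 1/2) : 0 ≤ gAux t := by
  unfold gAux; nlinarith [mul_nonneg (mul_nonneg h0 h0) h0]

lemma gAux_le_half {t : ℝ} (h0 : 0 ≤ t) (h1 : t ≤ 1/2) : gAux t ≤ 1/2 := by
  unfold gAux; nlinarith [mul_nonneg (sub_nonneg.2 h1) h0, sq_nonneg t, sq_nonneg (t - 1/2)]

lemma gAux_ge_self {t : ℝ} (h0 : 0 ≤ t) (h1 : t ≤ 1/2) : t ≤ gAux t := by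
  unfold gAux; nlinarith [mul_nonneg (mul_nonneg h0 h0) h0, mul_nonneg h0 (sub_nonneg.2 h1)]

lemma gAux_le_lin {t : ℝ} (h0 : 0 ≤ t) : gAux t ≤ 9/8 * t := by
  unfold gAux; nlinarith [mul_nonneg (mul_nonneg h0 h0) h0]

lemma gAux_ge_alpha {t : ℝ} (h0 : 0 ≤ t) (h1 : t ≤ 7/100) : 449/400 * t ≤ gAux t := by
  unfold gAux; nlinarith [mul_nonneg h0 h0, mul_nonneg (mul_nonneg h0 h0) (sub_nonneg.2 h1)]

lemma gAux_step {ε t : ℝ} (hε : 0 < ε) (hε2 : ε ≤ 1/4) (h1 : 7/100 ≤ t) (h2 : t ≤ 1/2 - ε) :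
    t + 7/100 * (1/8 - (1/2 - ε)^2/2) ≤ gAux t := by
  unfold gAux
  have ht0 : (0:ℝ) ≤ t := by linarith
  have h3 : (0:ℝ) ≤ 1/8 - t^2/2 := by nlinarith
  have h4 : 1/8 - t^2/2 ≥ 1/8 - (1/2 - ε)^2/2 := by nlinarith
  nlinarith [mul_le_mul h1 h4 (by nlinarith) ht0]

lemma gAux_iter_bounds (k : ℕ) {t : ℝ} (h0 : 0 ≤ t) (h1 : t ≤ 1/2) :
    0 ≤ gAux^[k] t ∧ gAux^[k] t ≤ 1/2 := by
  induction k with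
  | zero => exact ⟨by simpa using h0, by simpa using h1⟩
  | succ k ih =>
    rw [Function.iterate_succ_apply']
    exact ⟨gAux_nonneg ih.1 ih.2, gAux_le_half ih.1 ih.2⟩

lemma gAux_iter_upper (k : ℕ) {t : ℝ} (h0 : 0 ≤ t) (h1 : t ≤ 1/2) :
    gAux^[k] t ≤ (9/8)^k * t := by
  induction k with
  | zero => simp
  | succ k ih =>
    rw [Function.iterate_succ_apply']
    have h2 := (gAux_iter_bounds k h0 h1).1
    calc gAux (gAux^[k] t) ≤ 9/8 * gAux^[k] t := gAux_le_lin h2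
      _ ≤ 9/8 * ((9/8)^k * t) := by nlinarith
      _ = (9/8)^(k+1) * t := by ring

lemma gAux_iter_lower (k : ℕ) {t : ℝ} (h0 : 0 ≤ t) (h1 : t ≤ 1/2) :
    min ((449/400)^k * t) (7/100) ≤ gAux^[k] t := by
  induction k with
  | zero => simpa using min_le_left t (7/100)
  | succ k ih =>
    rw [Function.iterate_succ_apply']
    obtain ⟨hb0, hb1⟩ := gAux_iter_bounds k h0 h1
    rcases le_or_gt (7/100 : ℝ) (gAux^[k] t) with h | h
    · exact le_trans (min_le_right _ _) (le_trans h (gAux_ge_self hb0 hb1))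
    · have hmin : (449/400:ℝ)^k * t ≤ gAux^[k] t := by
        rcases min_cases ((449/400:ℝ)^k * t) (7/100) with ⟨he, _⟩ | ⟨he, hle⟩
        · rw [he] at ih; exact ih
        · rw [he] at ih; linarith
      have hstep := gAux_ge_alpha hb0 h.le
      refine le_trans (min_le_left _ _) ?_
      have hp : (0:ℝ) ≤ (449/400:ℝ)^k := by positivity
      calc (449/400:ℝ)^(k+1) * t = 449/400 * ((449/400)^k * t) := by ring
        _ ≤ 449/400 * gAux^[k] t := by nlinarith
        _ ≤ gAux (gAux^[k] t) := hstep

lemma gAux_iter_escape {ε : ℝ} (hε : 0 < ε) (hε2 : ε ≤ 1/4) (j : ℕ) {t : ℝ}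
    (hl : 7/100 ≤ t) (hu : t ≤ 1/2) :
    7/100 ≤ gAux^[j] t ∧ gAux^[j] t ≤ 1/2 ∧
      min ((j : ℝ) * (7/100 * (1/8 - (1/2 - ε)^2/2))) (1/2 - ε) ≤ gAux^[j] t := by
  set c : ℝ := 7/100 * (1/8 - (1/2 - ε)^2/2) with hc
  have hcpos : 0 < c := by rw [hc]; nlinarith
  induction j with
  | zero =>
    refine ⟨by simpa using hl, by simpa using hu, ?_⟩
    simp only [Function.iterate_zero_apply, Nat.cast_zero, zero_mul]
    have : min (0:ℝ) (1/2 - ε) ≤ 0 := min_le_left _ _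
    linarith
  | succ j ih =>
    obtain ⟨h1, h2, h3⟩ := ih
    have h0 : (0:ℝ) ≤ gAux^[j] t := by linarith
    rw [Function.iterate_succ_apply']
    refine ⟨le_trans h1 (gAux_ge_self h0 h2), gAux_le_half h0 h2, ?_⟩
    rcases le_or_gt (gAux^[j] t) (1/2 - ε) with hcase | hcase
    · rcases le_or_gt ((j:ℝ) * c) (1/2 - ε) with hj | hj
      · have hjc : (j:ℝ) * c ≤ gAux^[j] t := by rw [min_eq_left hj] at h3; exact h3
        have hstep := gAux_step hε hε2 h1 hcase
        refine le_trans (min_le_left _ _) ?_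
        push_cast
        linarith
      · have hge : (1/2 - ε : ℝ) ≤ gAux^[j] t := by rw [min_eq_right hj.le] at h3; exact h3
        exact le_trans (min_le_right _ _) (le_trans hge (gAux_ge_self h0 h2))
    · exact le_trans (min_le_right _ _) (le_trans hcase.le (gAux_ge_self h0 h2))

lemma hCubic_iter_conj (k : ℕ) (t : ℝ) : hCubic^[k] (1/2 + t) = 1/2 + gAux^[k] t := by
  induction k with
  | zero => simp
  | succ k ih =>
    rw [Function.iterate_succ_apply', Function.iterate_succ_apply', ih, hCubic_conj]

lemma numFact1 : ((9:ℝ)/8)^101 * (88/100)^100 < 1 := by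
  rw [div_pow, div_pow, div_mul_div_comm, div_lt_one (by positivity)]
  norm_num

lemma numFact2 : (1:ℝ) < (449/400)^101 * (89/100)^100 := by
  rw [div_pow, div_pow, div_mul_div_comm, lt_div_iff₀ (by positivity)]
  norm_num

lemma floor_km_le (m : ℕ) : 100 * ⌊(1.01 : ℝ) * m⌋₊ ≤ 101 * m := by
  have h1 : (⌊(1.01 : ℝ) * m⌋₊ : ℝ) ≤ 1.01 * m := Nat.floor_le (by positivity)
  have h2 : (100 * ⌊(1.01 : ℝ) * m⌋₊ : ℝ) ≤ (101 * m : ℝ) := by push_cast; linarith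
  exact_mod_cast h2

lemma floor_km_ge (m : ℕ) : 101 * m ≤ 100 * ⌊(1.01 : ℝ) * m⌋₊ + 100 := by
  have h1 : (1.01 : ℝ) * m < ⌊(1.01 : ℝ) * m⌋₊ + 1 := Nat.lt_floor_add_one _
  have h2 : (101 * m : ℝ) ≤ (100 * ⌊(1.01 : ℝ) * m⌋₊ + 100 : ℝ) := by push_cast; linarith
  exact_mod_cast h2

lemma floor_km_ge_m (m : ℕ) : m ≤ ⌊(1.01 : ℝ) * m⌋₊ := by
  have := floor_km_ge m; omega

lemma evtl_small {ε : ℝ} (hε : 0 < ε) :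
    ∀ᶠ m : ℕ in atTop, ((9:ℝ)/8)^(⌊(1.01 : ℝ) * m⌋₊) * (88/100)^m ≤ ε := by
  set γ : ℝ := (9/8)^101 * (88/100)^100 with hγ
  have hγ0 : 0 ≤ γ := by positivity
  set ε' : ℝ := min ε 1 with hε'
  have hε'0 : 0 < ε' := lt_min hε one_pos
  have htend : Tendsto (fun m : ℕ => γ ^ m) atTop (nhds 0) :=
    tendsto_pow_atTop_nhds_zero_of_lt_one hγ0 (by rw [hγ]; exact numFact1)
  filter_upwards [htend.eventually_lt_const (by positivity : (0:ℝ) < ε'^100)] with m hm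
  set k := ⌊(1.01 : ℝ) * m⌋₊ with hk
  set x : ℝ := (9/8)^k * (88/100)^m with hx
  have hx0 : 0 ≤ x := by positivity
  have key : x^100 ≤ γ^m := by
    have hlhs : x^100 = ((9:ℝ)/8)^(100*k) * (88/100)^(100*m) := by
      rw [hx, mul_pow, ← pow_mul, ← pow_mul, Nat.mul_comm k 100, Nat.mul_comm m 100]
    have hrhs : γ^m = ((9:ℝ)/8)^(101*m) * (88/100)^(100*m) := by
      rw [hγ, mul_pow, ← pow_mul, ← pow_mul, Nat.mul_comm 101 m, Nat.mul_comm 100 m,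
        Nat.mul_comm m 101, Nat.mul_comm m 100]
    rw [hlhs, hrhs]
    have h3 : ((9:ℝ)/8)^(100*k) ≤ (9/8)^(101*m) :=
      pow_le_pow_right₀ (by norm_num) (floor_km_le m)
    exact mul_le_mul_of_nonneg_right h3 (by positivity)
  by_contra hcon
  push_neg at hcon
  have hε'x : ε' < x := lt_of_le_of_lt (min_le_left _ _) hcon
  have : ε'^100 < x^100 := by
    apply pow_lt_pow_left₀ hε'x hε'0.le
    norm_num
  linarith

lemma evtl_big (M : ℝ) :
    ∀ᶠ m : ℕ in atTop, M ≤ ((449:ℝ)/400)^(⌊(1.01 : ℝ) * m⌋₊) * (89/100)^m := by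
  set β : ℝ := (449/400)^101 * (89/100)^100 with hβ
  set M' : ℝ := max M 1 with hM'
  have hM'0 : 0 < M' := lt_of_lt_of_le one_pos (le_max_right _ _)
  have htend : Tendsto (fun m : ℕ => β ^ m) atTop atTop :=
    tendsto_pow_atTop_atTop_of_one_lt (by rw [hβ]; exact numFact2)
  filter_upwards [htend.eventually_ge_atTop (M'^100 * (449/400)^100)] with m hm
  set k := ⌊(1.01 : ℝ) * m⌋₊ with hk
  set x : ℝ := (449/400:ℝ)^k * (89/100)^m with hx
  have hx0 : 0 ≤ x := by positivity
  have key : β^m ≤ x^100 * (449/400)^100 := by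
    have hlhs : x^100 * ((449:ℝ)/400)^100 = ((449:ℝ)/400)^(100*k+100) * (89/100)^(100*m) := by
      rw [hx, mul_pow, ← pow_mul, ← pow_mul, Nat.mul_comm k 100, Nat.mul_comm m 100, pow_add]
      ring
    have hrhs : β^m = ((449:ℝ)/400)^(101*m) * (89/100)^(100*m) := by
      rw [hβ, mul_pow, ← pow_mul, ← pow_mul, Nat.mul_comm 101 m, Nat.mul_comm 100 m,
        Nat.mul_comm m 101, Nat.mul_comm m 100]
    rw [hlhs, hrhs]
    have h3 : ((449:ℝ)/400)^(101*m) ≤ (449/400)^(100*k+100) :=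
      pow_le_pow_right₀ (by norm_num) (floor_km_ge m)
    exact mul_le_mul_of_nonneg_right h3 (by positivity)
  have hxM : M' ≤ x := by
    by_contra hcon
    push_neg at hcon
    have h1 : x^100 < M'^100 := by
      apply pow_lt_pow_left₀ hcon hx0
      norm_num
    have h2 : x^100 * ((449:ℝ)/400)^100 < M'^100 * (449/400)^100 :=
      mul_lt_mul_of_pos_right h1 (by positivity)
    linarith
  exact le_trans (le_max_left _ _) hxM


/-- For the iterates of `h(x) = −x³/2 + 3x²/4 + 3x/4`:
`h^(⌊1.01·m⌋)(1/2 + 0.88^m) → 1/2`, whereas `h^(⌊1.01·m⌋)(1/2 + 0.89^m) → 1`. -/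
theorem stmt19 :
    Tendsto (fun m : ℕ => hCubic^[⌊(1.01 : ℝ) * m⌋₊] (1/2 + (0.88 : ℝ) ^ m))
      atTop (nhds (1/2)) ∧
    Tendsto (fun m : ℕ => hCubic^[⌊(1.01 : ℝ) * m⌋₊] (1/2 + (0.89 : ℝ) ^ m))
      atTop (nhds 1) := by
  constructor
  · -- convergence to 1/2
    rw [Metric.tendsto_atTop]
    intro ε hε
    have hev : ∀ᶠ m : ℕ in atTop,
        dist (hCubic^[⌊(1.01 : ℝ) * m⌋₊] (1/2 + (0.88 : ℝ) ^ m)) (1/2) < ε := by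
      filter_upwards [evtl_small (show (0:ℝ) < ε/2 by linarith), eventually_ge_atTop 6]
        with m h1 h2
      set k := ⌊(1.01 : ℝ) * m⌋₊ with hk
      have h088 : (0.88 : ℝ) = 88/100 := by norm_num
      have hδ0 : (0:ℝ) ≤ (0.88:ℝ)^m := by positivity
      have hδh : (0.88:ℝ)^m ≤ 1/2 := by
        calc (0.88:ℝ)^m ≤ (0.88:ℝ)^6 :=
              pow_le_pow_of_le_one (by norm_num) (by norm_num) h2
          _ ≤ 1/2 := by norm_num
      have hub := gAux_iter_upper k hδ0 hδh
      have hlb := (gAux_iter_bounds k hδ0 hδh).1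
      rw [h088] at hub
      rw [hCubic_iter_conj, Real.dist_eq, abs_lt]
      constructor <;> nlinarith [h1]
    exact eventually_atTop.mp hev
  · -- convergence to 1
    rw [Metric.tendsto_atTop]
    intro ε hε
    set ε' : ℝ := min (ε/2) (1/8) with hε'def
    have hε'0 : 0 < ε' := lt_min (by linarith) (by norm_num)
    have hε'14 : ε' ≤ 1/4 := le_trans (min_le_right _ _) (by norm_num)
    have hε'ε : ε' < ε := lt_of_le_of_lt (min_le_left _ _) (by linarith)
    set c : ℝ := 7/100 * (1/8 - (1/2 - ε')^2/2) with hcdef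
    have hc0 : 0 < c := by
      have h1 : (0:ℝ) ≤ 1/2 - ε' := by
        have := min_le_right (ε/2) (1/8); rw [← hε'def] at this; linarith
      nlinarith
    set J : ℕ := ⌈(1/2 : ℝ) / c⌉₊ with hJdef
    have hJc : (1/2 : ℝ) ≤ (J:ℝ) * c := by
      have h1 : (1/2 : ℝ) / c ≤ (J:ℝ) := Nat.le_ceil _
      rw [div_le_iff₀ hc0] at h1
      exact h1
    have hev : ∀ᶠ m : ℕ in atTop,
        dist (hCubic^[⌊(1.01 : ℝ) * m⌋₊] (1/2 + (0.89 : ℝ) ^ m)) 1 < ε := by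
      filter_upwards [evtl_big (7/100 * (449/400)^J), eventually_ge_atTop (max 6 J)]
        with m h1 h2
      set k := ⌊(1.01 : ℝ) * m⌋₊ with hk
      have h089 : (0.89 : ℝ) = 89/100 := by norm_num
      have hm6 : 6 ≤ m := le_trans (le_max_left 6 J) h2
      have hkJ : J ≤ k := le_trans (le_trans (le_max_right 6 J) h2) (floor_km_ge_m m)
      set K : ℕ := k - J with hKdef
      have hKJ : K + J = k := Nat.sub_add_cancel hkJ
      have hδ0 : (0:ℝ) ≤ (0.89:ℝ)^m := by positivity
      have hδh : (0.89:ℝ)^m ≤ 1/2 := by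
        calc (0.89:ℝ)^m ≤ (0.89:ℝ)^6 :=
              pow_le_pow_of_le_one (by norm_num) (by norm_num) hm6
          _ ≤ 1/2 := by norm_num
      have hA : (0:ℝ) < (449/400:ℝ)^J := by positivity
      have hαK : 7/100 ≤ (449/400:ℝ)^K * (0.89:ℝ)^m := by
        rw [← hKJ, pow_add] at h1
        rw [h089]
        have h1' : 7/100 * ((449/400:ℝ)^J) ≤ ((449/400:ℝ)^K * (89/100)^m) * (449/400)^J := by
          calc 7/100 * ((449/400:ℝ)^J) ≤ (449/400:ℝ)^K * (449/400)^J * (89/100)^m := h1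
            _ = ((449/400:ℝ)^K * (89/100)^m) * (449/400)^J := by ring
        exact le_of_mul_le_mul_right h1' hA
      have hEmin := gAux_iter_lower K hδ0 hδh
      have hη : 7/100 ≤ gAux^[K] ((0.89:ℝ)^m) := by
        rw [min_eq_right hαK] at hEmin; exact hEmin
      have hKb := gAux_iter_bounds K hδ0 hδh
      have hF := gAux_iter_escape hε'0 hε'14 J hη hKb.2
      have hmin2 : min ((J : ℝ) * (7/100 * (1/8 - (1/2 - ε')^2/2))) (1/2 - ε') = 1/2 - ε' := by
        apply min_eq_right
        rw [← hcdef]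
        linarith
      rw [hmin2] at hF
      have hcomp : gAux^[J] (gAux^[K] ((0.89:ℝ)^m)) = gAux^[k] ((0.89:ℝ)^m) := by
        rw [← Function.iterate_add_apply, Nat.add_comm J K, hKJ]
      rw [hcomp] at hF
      have hkb2 := (gAux_iter_bounds k hδ0 hδh).2
      rw [hCubic_iter_conj, Real.dist_eq, abs_lt]
      constructor <;> [linarith [hF.2.2]; linarith [hF.2.2]]
    exact eventually_atTop.mp hev


end BooleanNoise
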